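/- (Witten index) Let E be a finite-dimensional complex inner product space, Q a linear endomorphism of E with Q∘Q = 0 and adjoint Q†, H = (1/2)(Q∘Q† + Q†∘Q), and let σ be a linear endomorphism of E with σ∘σ = id, σ† = σ, and σ∘Q = −Q∘σ. Then for every real β > 0, the trace of σ∘exp(−βH) equals dim(ker H ∩ ker(σ − id)) − dim(ker H ∩ ker(σ + id)); in particular this trace is an integer independent of β. -/

import Mathlib

open ContinuousLinearMap Module

local notation "⟪" x ", " y "⟫" => @inner ℂ _ _ x y

section aux
variable {E : Type*} [NormedAddCommGroup E] [InnerProductSpace ℂ E] [FiniteDimensional ℂ E]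

local notation "dummy_unused" "⟪" x ", " y "⟫" => @inner ℂ _ _ x y

lemma aux_exp_eigen (T : E →L[ℂ] E) (v : E) (c : ℂ) (h : T v = c • v) :
    NormedSpace.exp T v = Complex.exp c • v := by
  have hpow : ∀ n : ℕ, (T ^ n) v = c ^ n • v := by
    intro n
    induction n with
    | zero => simp
    | succ n ih =>
      have h1 : (T ^ (n + 1)) v = (T ^ n) (T v) := by rw [pow_succ]; rfl
      rw [h1, h, map_smul, ih, smul_smul, ← pow_succ']
  have hsum : Summable fun n : ℕ => ((n.factorial : ℂ))⁻¹ • T ^ n := NormedSpace.expSeries_summable' T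
  have hsumc : Summable fun n : ℕ => ((n.factorial : ℂ))⁻¹ * c ^ n := by
    simpa [smul_eq_mul] using NormedSpace.expSeries_summable' (𝕂 := ℂ) c
  calc NormedSpace.exp T v = (∑' n : ℕ, ((n.factorial : ℂ))⁻¹ • T ^ n) v := by
        rw [NormedSpace.exp_eq_tsum ℂ]
    _ = ∑' n : ℕ, (((n.factorial : ℂ))⁻¹ • T ^ n) v := (ContinuousLinearMap.apply ℂ E v).map_tsum hsum
    _ = ∑' n : ℕ, (((n.factorial : ℂ))⁻¹ * c ^ n) • v := by
        refine tsum_congr fun n => ?_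
        rw [ContinuousLinearMap.smul_apply, hpow, smul_smul]
    _ = (∑' n : ℕ, ((n.factorial : ℂ))⁻¹ * c ^ n) • v := hsumc.tsum_smul_const v
    _ = Complex.exp c • v := by
        congr 1
        rw [Complex.exp_eq_exp_ℂ, NormedSpace.exp_eq_tsum ℂ]
        simp [smul_eq_mul]

omit [FiniteDimensional ℂ E] in
lemma aux_trace {n : ℕ} (b : OrthonormalBasis (Fin n) ℂ E) (f : E →ₗ[ℂ] E) :
    LinearMap.trace ℂ E f = ∑ i, ⟪b i, f (b i)⟫ := by
  rw [LinearMap.trace_eq_matrix_trace ℂ b.toBasis, Matrix.trace]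
  refine Finset.sum_congr rfl fun i _ => ?_
  rw [Matrix.diag_apply, LinearMap.toMatrix_apply, OrthonormalBasis.coe_toBasis_repr_apply,
    OrthonormalBasis.repr_apply_apply, OrthonormalBasis.coe_toBasis]

end aux

set_option maxHeartbeats 2000000

/-- Witten index: on a finite-dimensional complex inner product space, with `Q² = 0`,
`H = (1/2)(Q Q† + Q† Q)` and a grading `σ`, the trace of `σ exp(-βH)` equals
`dim(ker H ∩ ker(σ - 1)) - dim(ker H ∩ ker(σ + 1))` for every `β > 0`; in particular it
is an integer independent of `β`. -/
theorem witten_index {E : Type*} [NormedAddCommGroup E] [InnerProductSpace ℂ E]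
    [FiniteDimensional ℂ E]
    (Q : E →L[ℂ] E) (hQ : Q ∘L Q = 0)
    (H : E →L[ℂ] E) (hH : H = (1 / 2 : ℂ) • (Q ∘L adjoint Q + adjoint Q ∘L Q))
    (σ : E →L[ℂ] E) (hσ2 : σ ∘L σ = ContinuousLinearMap.id ℂ E) (hσadj : adjoint σ = σ)
    (hσQ : σ ∘L Q = -(Q ∘L σ)) :
    ∀ β : ℝ, 0 < β →
      LinearMap.trace ℂ E ((σ ∘L NormedSpace.exp ((-β : ℂ) • H) : E →L[ℂ] E) : E →ₗ[ℂ] E) =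
        ((finrank ℂ ↥(LinearMap.ker (H : E →ₗ[ℂ] E) ⊓ LinearMap.ker ((σ - ContinuousLinearMap.id ℂ E : E →L[ℂ] E) : E →ₗ[ℂ] E)) : ℂ) -
          (finrank ℂ ↥(LinearMap.ker (H : E →ₗ[ℂ] E) ⊓ LinearMap.ker ((σ + ContinuousLinearMap.id ℂ E : E →L[ℂ] E) : E →ₗ[ℂ] E)) : ℂ)) := by
  intro β hβ
  set A : E →L[ℂ] E := Q + adjoint Q with hA
  have hQd2 : adjoint Q ∘L adjoint Q = 0 := by
    rw [← adjoint_comp, hQ]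
    simp
  have hA2 : A ∘L A = (2 : ℂ) • H := by
    rw [hA, add_comp, comp_add, comp_add, hQ, hQd2, zero_add, add_zero, hH, smul_smul]
    norm_num
  have hAself : IsSelfAdjoint A := by
    rw [ContinuousLinearMap.isSelfAdjoint_iff']
    rw [hA, map_add, adjoint_adjoint, add_comm]
  have hAsym : (A : E →ₗ[ℂ] E).IsSymmetric := hAself.isSymmetric
  have hQdσ : σ ∘L adjoint Q = -(adjoint Q ∘L σ) := by
    have h := congrArg ContinuousLinearMap.adjoint hσQ
    rw [adjoint_comp, map_neg, adjoint_comp, hσadj] at h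
    rw [h, neg_neg]
  have hσA : σ ∘L A = -(A ∘L σ) := by
    rw [hA, comp_add, add_comp, hσQ, hQdσ, neg_add]
  have hσA' : ∀ x, σ (A x) = -(A (σ x)) := by
    intro x
    simpa using DFunLike.congr_fun hσA x
  have hσσ : ∀ x, σ (σ x) = x := by
    intro x
    simpa using DFunLike.congr_fun hσ2 x
  have hAσ' : ∀ x, A (σ x) = -(σ (A x)) := by
    intro x
    rw [hσA' x, neg_neg]
  have hA2' : ∀ x, A (A x) = (2 : ℂ) • H x := by
    intro x
    simpa using DFunLike.congr_fun hA2 x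
  have hσH : ∀ x, σ (H x) = H (σ x) := by
    intro x
    have h2 : (2 : ℂ) • σ (H x) = (2 : ℂ) • H (σ x) := by
      calc (2 : ℂ) • σ (H x) = σ ((2 : ℂ) • H x) := (map_smul σ _ _).symm
        _ = σ (A (A x)) := by rw [hA2']
        _ = -(A (σ (A x))) := hσA' _
        _ = -(A (-(A (σ x)))) := by rw [hσA' x]
        _ = A (A (σ x)) := by rw [map_neg, neg_neg]
        _ = (2 : ℂ) • H (σ x) := hA2' _
    exact smul_right_injective E two_ne_zero h2
  have hkerA : ∀ x, H x = 0 → A x = 0 := by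
    intro x hx
    have h0 : ⟪A x, A x⟫ = 0 := by
      have := hAsym x (A x)
      calc ⟪A x, A x⟫ = ⟪x, A (A x)⟫ := hAsym x (A x)
        _ = 0 := by rw [hA2', hx, smul_zero, inner_zero_right]
    exact inner_self_eq_zero.mp h0
  -- eigenbasis of A
  obtain ⟨n, hn⟩ : ∃ n, finrank ℂ E = n := ⟨_, rfl⟩
  set b := hAsym.eigenvectorBasis hn with hb
  set μ := hAsym.eigenvalues hn with hμ
  have hbA : ∀ i, A (b i) = (μ i : ℂ) • b i := fun i => hAsym.apply_eigenvectorBasis hn i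
  have hbH : ∀ i, H (b i) = ((μ i : ℂ) ^ 2 / 2) • b i := by
    intro i
    have h2 : (2 : ℂ) • H (b i) = (2 : ℂ) • (((μ i : ℂ) ^ 2 / 2) • b i) := by
      rw [← hA2' (b i), hbA i, map_smul, hbA i, smul_smul, smul_smul]
      congr 1
      ring
    exact smul_right_injective E two_ne_zero h2
  have hexp : ∀ i, NormedSpace.exp ((-β : ℂ) • H) (b i)
      = Complex.exp ((-β : ℂ) * ((μ i : ℂ) ^ 2 / 2)) • b i := by
    intro i
    apply aux_exp_eigen
    rw [ContinuousLinearMap.smul_apply, hbH, smul_smul]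
  -- kernel of H and orthogonal projection onto it
  set K : Submodule ℂ E := LinearMap.ker (H : E →ₗ[ℂ] E) with hK
  set P : E →L[ℂ] E := K.subtypeL ∘L K.orthogonalProjectionOnto with hP
  have hPmem : ∀ x, P x ∈ K := fun x => (K.orthogonalProjectionOnto x).2
  have hPid : ∀ x ∈ K, P x = x := by
    intro x hx
    exact (Submodule.starProjection_eq_self_iff (K := K)).mpr hx
  have hker_b : ∀ i, μ i = 0 → b i ∈ K := by
    intro i h0
    have hA0 : A (b i) = 0 := by rw [hbA, h0]; simp
    have h2 : (2 : ℂ) • H (b i) = (2 : ℂ) • (0 : E) := by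
      rw [← hA2' (b i), hA0, map_zero, smul_zero]
    have := smul_right_injective E two_ne_zero h2
    simpa [hK, LinearMap.mem_ker] using this
  have horth_b : ∀ i, μ i ≠ 0 → b i ∈ Kᗮ := by
    intro i h0
    intro x hx
    have hAx : A x = 0 := hkerA x (by simpa [hK, LinearMap.mem_ker] using hx)
    have h1 : (μ i : ℂ) * ⟪x, b i⟫ = 0 := by
      calc (μ i : ℂ) * ⟪x, b i⟫ = ⟪x, A (b i)⟫ := by rw [hbA, inner_smul_right]
        _ = ⟪A x, b i⟫ := (hAsym x (b i)).symm
        _ = 0 := by rw [hAx, inner_zero_left]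
    rcases mul_eq_zero.mp h1 with h | h
    · exact absurd (Complex.ofReal_eq_zero.mp h) h0
    · exact h
  have hinner0 : ∀ i, μ i ≠ 0 → ⟪b i, σ (b i)⟫ = 0 := by
    intro i h0
    have h1 : (μ i : ℂ) * ⟪b i, σ (b i)⟫ = -((μ i : ℂ) * ⟪b i, σ (b i)⟫) := by
      calc (μ i : ℂ) * ⟪b i, σ (b i)⟫ = ⟪(μ i : ℂ) • b i, σ (b i)⟫ := by
            rw [inner_smul_left, Complex.conj_ofReal]
        _ = ⟪A (b i), σ (b i)⟫ := by rw [hbA]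
        _ = ⟪b i, A (σ (b i))⟫ := hAsym (b i) (σ (b i))
        _ = ⟪b i, -(σ (A (b i)))⟫ := by rw [hAσ']
        _ = -((μ i : ℂ) * ⟪b i, σ (b i)⟫) := by
            rw [hbA, map_smul, inner_neg_right, inner_smul_right]
    have h2 : ⟪b i, σ (b i)⟫ * (μ i : ℂ) = 0 := by
      linear_combination (1 / 2 : ℂ) * h1
    rcases mul_eq_zero.mp h2 with h | h
    · exact h
    · exact absurd (Complex.ofReal_eq_zero.mp h) h0
  -- the two traces agree
  have t1 : LinearMap.trace ℂ E ((σ ∘L NormedSpace.exp ((-β : ℂ) • H) : E →L[ℂ] E) : E →ₗ[ℂ] E)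
      = ∑ i, ⟪b i, σ (NormedSpace.exp ((-β : ℂ) • H) (b i))⟫ := aux_trace b _
  have t2 : LinearMap.trace ℂ E ((σ ∘L P : E →L[ℂ] E) : E →ₗ[ℂ] E)
      = ∑ i, ⟪b i, σ (P (b i))⟫ := aux_trace b _
  have hterm : ∀ i, ⟪b i, σ (NormedSpace.exp ((-β : ℂ) • H) (b i))⟫ = ⟪b i, σ (P (b i))⟫ := by
    intro i
    by_cases h0 : μ i = 0
    · rw [hexp, hPid _ (hker_b i h0), h0]
      norm_num
    · have hp0 : P (b i) = 0 := by
        have := Submodule.orthogonalProjectionOnto_apply_of_mem_orthogonal (K := K)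
          (horth_b i h0)
        simp [hP, this]
      rw [hexp, hp0, map_zero, inner_zero_right, map_smul, inner_smul_right, hinner0 i h0,
        mul_zero]
  have ttrace : LinearMap.trace ℂ E
        ((σ ∘L NormedSpace.exp ((-β : ℂ) • H) : E →L[ℂ] E) : E →ₗ[ℂ] E)
      = LinearMap.trace ℂ E ((σ ∘L P : E →L[ℂ] E) : E →ₗ[ℂ] E) := by
    rw [t1, t2]
    exact Finset.sum_congr rfl fun i _ => hterm i
  -- projections onto the two graded pieces of ker H
  have hσK : ∀ x ∈ K, σ x ∈ K := by
    intro x hx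
    have hx0 : H x = 0 := by simpa [hK, LinearMap.mem_ker] using hx
    have : H (σ x) = 0 := by rw [← hσH, hx0, map_zero]
    simpa [hK, LinearMap.mem_ker] using this
  set πp : E →L[ℂ] E := (1 / 2 : ℂ) • (P + σ ∘L P) with hπp
  set πm : E →L[ℂ] E := (1 / 2 : ℂ) • (P - σ ∘L P) with hπm
  have hπp_apply : ∀ x, πp x = (1 / 2 : ℂ) • (P x + σ (P x)) := by
    intro x; simp [hπp]
  have hπm_apply : ∀ x, πm x = (1 / 2 : ℂ) • (P x - σ (P x)) := by
    intro x; simp [hπm]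
  have hmemH : ∀ y ∈ K, H y = 0 := fun y hy => by simpa [hK, LinearMap.mem_ker] using hy
  have hproj1 : LinearMap.IsProj
      (LinearMap.ker (H : E →ₗ[ℂ] E) ⊓ LinearMap.ker ((σ - ContinuousLinearMap.id ℂ E : E →L[ℂ] E) : E →ₗ[ℂ] E))
      (πp : E →ₗ[ℂ] E) := by
    constructor
    · intro x
      refine Submodule.mem_inf.mpr ⟨?_, ?_⟩
      · have : H (πp x) = 0 := by
          rw [hπp_apply, map_smul, map_add, hmemH _ (hPmem x), hmemH _ (hσK _ (hPmem x)),
            add_zero, smul_zero]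
        simpa [LinearMap.mem_ker] using this
      · have : σ (πp x) = πp x := by
          rw [hπp_apply, map_smul, map_add, hσσ, add_comm (σ (P x))]
        simp only [LinearMap.mem_ker]
        simp [ContinuousLinearMap.sub_apply, this]
    · intro x hx
      rcases Submodule.mem_inf.mp hx with ⟨hx1, hx2⟩
      have hσx : σ x = x := by
        have h := hx2
        simp only [LinearMap.mem_ker, ContinuousLinearMap.sub_apply,
          ContinuousLinearMap.id_apply] at h
        exact sub_eq_zero.mp h
      have hPx : P x = x := hPid x hx1
      show πp x = x
      rw [hπp_apply, hPx, hσx, ← two_smul ℂ x, smul_smul]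
      norm_num
  have hproj2 : LinearMap.IsProj
      (LinearMap.ker (H : E →ₗ[ℂ] E) ⊓ LinearMap.ker ((σ + ContinuousLinearMap.id ℂ E : E →L[ℂ] E) : E →ₗ[ℂ] E))
      (πm : E →ₗ[ℂ] E) := by
    constructor
    · intro x
      refine Submodule.mem_inf.mpr ⟨?_, ?_⟩
      · have : H (πm x) = 0 := by
          rw [hπm_apply, map_smul, map_sub, hmemH _ (hPmem x), hmemH _ (hσK _ (hPmem x)),
            sub_zero, smul_zero]
        simpa [LinearMap.mem_ker] using this
      · have hs : σ (πm x) = -(πm x) := by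
          rw [hπm_apply, map_smul, map_sub, hσσ, ← smul_neg, neg_sub]
        simp only [LinearMap.mem_ker]
        simp [ContinuousLinearMap.add_apply, hs]
    · intro x hx
      rcases Submodule.mem_inf.mp hx with ⟨hx1, hx2⟩
      have hσx : σ x = -x := by
        have h := hx2
        simp only [LinearMap.mem_ker, ContinuousLinearMap.add_apply,
          ContinuousLinearMap.id_apply] at h
        exact eq_neg_of_add_eq_zero_left h
      have hPx : P x = x := hPid x hx1
      show πm x = x
      rw [hπm_apply, hPx, hσx, sub_neg_eq_add, ← two_smul ℂ x, smul_smul]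
      norm_num
  have hdiff : (σ ∘L P : E →L[ℂ] E) = πp - πm := by
    ext x
    simp only [hπp_apply, hπm_apply, ContinuousLinearMap.sub_apply,
      ContinuousLinearMap.comp_apply]
    module
  rw [ttrace, hdiff, ContinuousLinearMap.coe_sub, map_sub, hproj1.trace, hproj2.trace]
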